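/- Let H⃗ be an anti-directed orientation of a graph H with δ(H) ≥ 2 and v(H) ≥ 4. Then for any two edges of H and any orientation of them, the partial orientation extends to an orientation of H containing a directed path with 2 edges (hence not isomorphic to H⃗, since H⃗ is anti-directed). -/

import Mathlib

/-- An orientation of a simple graph `G`: an assignment of a direction to each edge. -/
structure GraphOrientation {V : Type*} (G : SimpleGraph V) where
  adj : V → V → Prop
  le : ∀ {u v}, adj u v → G.Adj u v
  total : ∀ {u v}, G.Adj u v → adj u v ∨ adj v u
  asymm : ∀ {u v}, adj u v → ¬ adj v u

lemma edge_ncard {W : Type*} [Fintype W] {H : SimpleGraph W} (d : GraphOrientation H) :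
    {p : W × W | d.adj p.1 p.2}.ncard = H.edgeSet.ncard := by
  classical
  have hinj : Set.InjOn (fun p : W × W => s(p.1, p.2)) {p : W × W | d.adj p.1 p.2} := by
    rintro ⟨x1, x2⟩ hx ⟨y1, y2⟩ hy heq
    simp only [Set.mem_setOf_eq] at hx hy
    rcases Sym2.eq_iff.1 heq with ⟨h1, h2⟩ | ⟨h1, h2⟩
    · simp only [Prod.mk.injEq]; exact ⟨h1, h2⟩
    · subst h1; subst h2; exact absurd hx (d.asymm hy)
  have himg : (fun p : W × W => s(p.1, p.2)) '' {p : W × W | d.adj p.1 p.2} = H.edgeSet := by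
    ext e
    induction e using Sym2.ind with
    | _ x y =>
      simp only [Set.mem_image, Set.mem_setOf_eq, SimpleGraph.mem_edgeSet]
      constructor
      · rintro ⟨⟨p1, p2⟩, hp, heq⟩
        rcases Sym2.eq_iff.1 heq with ⟨h1, h2⟩ | ⟨h1, h2⟩
        · subst h1; subst h2; exact d.le hp
        · subst h1; subst h2; exact (d.le hp).symm
      · intro hxy
        rcases d.total hxy with hxy' | hyx'
        · exact ⟨(x, y), hxy', rfl⟩
        · exact ⟨(y, x), hyx', Sym2.eq_swap⟩
  rw [← himg, Set.ncard_image_of_injOn hinj]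

lemma no_embed {W : Type*} [Fintype W] {H : SimpleGraph W} (h o : GraphOrientation H)
    (hanti : ∀ v : W, (∀ u, ¬ h.adj u v) ∨ (∀ u, ¬ h.adj v u))
    (x y z : W) (h1 : o.adj x y) (h2 : o.adj y z) :
    ¬ ∃ g : W → W, Function.Injective g ∧ ∀ a b, h.adj a b → o.adj (g a) (g b) := by
  classical
  rintro ⟨g, hg, hmap⟩
  set Eh : Set (W × W) := {p | h.adj p.1 p.2} with hEh
  set Eo : Set (W × W) := {p | o.adj p.1 p.2} with hEo
  have hF : Function.Injective (fun p : W × W => (g p.1, g p.2)) := by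
    rintro ⟨a1, a2⟩ ⟨b1, b2⟩ hab
    simp only [Prod.mk.injEq] at hab
    exact Prod.ext (hg hab.1) (hg hab.2)
  have hsub : (fun p : W × W => (g p.1, g p.2)) '' Eh ⊆ Eo := by
    rintro ⟨a, b⟩ ⟨⟨p1, p2⟩, hp, heq⟩
    simp only [Prod.mk.injEq] at heq
    rw [hEo, Set.mem_setOf_eq, ← heq.1, ← heq.2]
    exact hmap _ _ hp
  have hcard : Eo.ncard ≤ ((fun p : W × W => (g p.1, g p.2)) '' Eh).ncard := by
    rw [Set.ncard_image_of_injective _ hF, edge_ncard, edge_ncard]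
  have heq : (fun p : W × W => (g p.1, g p.2)) '' Eh = Eo :=
    Set.eq_of_subset_of_ncard_le hsub hcard (Set.toFinite _)
  have hxy : (x, y) ∈ (fun p : W × W => (g p.1, g p.2)) '' Eh := heq ▸ h1
  have hyz : (y, z) ∈ (fun p : W × W => (g p.1, g p.2)) '' Eh := heq ▸ h2
  obtain ⟨⟨p1, p2⟩, hp, hpe⟩ := hxy
  obtain ⟨⟨q1, q2⟩, hq, hqe⟩ := hyz
  simp only [Prod.mk.injEq] at hpe hqe
  have hpq : p2 = q1 := hg (hpe.2.trans hqe.1.symm)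
  change h.adj p1 p2 at hp; change h.adj q1 q2 at hq
  rw [hpq] at hp
  rcases hanti q1 with hin | hout
  · exact hin p1 hp
  · exact hout q2 hq

lemma build {W : Type*} [Fintype W] {H : SimpleGraph W} (h : GraphOrientation H)
    (u₁ v₁ u₂ v₂ a b c : W)
    (e₁ : H.Adj u₁ v₁) (e₂ : H.Adj u₂ v₂) (hab : H.Adj a b) (hbc : H.Adj b c)
    (hrev : ∀ p ∈ ({(u₁, v₁), (u₂, v₂), (a, b), (b, c)} : Set (W × W)),
      Prod.swap p ∉ ({(u₁, v₁), (u₂, v₂), (a, b), (b, c)} : Set (W × W))) :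
    ∃ o : GraphOrientation H, o.adj u₁ v₁ ∧ o.adj u₂ v₂ ∧ o.adj a b ∧ o.adj b c := by
  classical
  set P : Set (W × W) := {(u₁, v₁), (u₂, v₂), (a, b), (b, c)} with hP
  refine ⟨⟨fun x y => H.Adj x y ∧ ((x, y) ∈ P ∨ ((x, y) ∉ P ∧ (y, x) ∉ P ∧ h.adj x y)), ?_, ?_, ?_⟩,
    ?_, ?_, ?_, ?_⟩
  · exact fun h => h.1
  · intro x y hxy
    by_cases h1 : (x, y) ∈ P
    · exact Or.inl ⟨hxy, Or.inl h1⟩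
    by_cases h2 : (y, x) ∈ P
    · exact Or.inr ⟨hxy.symm, Or.inl h2⟩
    rcases h.total hxy with hd | hd
    · exact Or.inl ⟨hxy, Or.inr ⟨h1, h2, hd⟩⟩
    · exact Or.inr ⟨hxy.symm, Or.inr ⟨h2, h1, hd⟩⟩
  · rintro x y ⟨_, hxy⟩ ⟨_, hyx⟩
    rcases hxy with hxy | ⟨hn1, hn2, hd⟩
    · rcases hyx with hyx | ⟨hn1, hn2, _⟩
      · exact hrev _ hxy hyx
      · exact hn2 hxy
    · rcases hyx with hyx | ⟨_, _, hd'⟩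
      · exact hn2 hyx
      · exact h.asymm hd hd'
  · exact ⟨e₁, Or.inl (by simp [hP])⟩
  · exact ⟨e₂, Or.inl (by simp [hP])⟩
  · exact ⟨hab, Or.inl (by simp [hP])⟩
  · exact ⟨hbc, Or.inl (by simp [hP])⟩

/-- Let `H⃗` be an anti-directed orientation of a graph `H` with
`δ(H) ≥ 2` and `v(H) ≥ 4`.  Then for any two distinct edges of `H` and any
orientation of them (`u₁ → v₁` and `u₂ → v₂`), the partial orientation extends to
an orientation of `H` containing a directed path with 2 edges (hence containing no
copy of `H⃗`, since `H⃗` is anti-directed). -/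
theorem antidirected_two_ramsey_avoidable {W : Type*} [Fintype W]
    (H : SimpleGraph W) [DecidableRel H.Adj]
    (hcard : 4 ≤ Fintype.card W) (hδ : 2 ≤ H.minDegree)
    (h : GraphOrientation H)
    (hanti : ∀ v : W, (∀ u, ¬ h.adj u v) ∨ (∀ u, ¬ h.adj v u))
    (u₁ v₁ u₂ v₂ : W) (e₁ : H.Adj u₁ v₁) (e₂ : H.Adj u₂ v₂)
    (hef : s(u₁, v₁) ≠ s(u₂, v₂)) :
    ∃ o : GraphOrientation H, o.adj u₁ v₁ ∧ o.adj u₂ v₂ ∧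
      (∃ a b c : W, a ≠ c ∧ o.adj a b ∧ o.adj b c) ∧
      ¬ ∃ g : W → W, Function.Injective g ∧
        ∀ a b, h.adj a b → o.adj (g a) (g b) := by
  classical
  haveI : Nonempty W := by
    rw [← Fintype.card_pos_iff]; omega
  have hnbr : ∀ v u : W, ∃ w, H.Adj v w ∧ w ≠ u := by
    intro v u
    have h2 : 1 < (H.neighborFinset v).card := by
      have h3 := H.minDegree_le_degree v
      rw [SimpleGraph.card_neighborFinset_eq_degree]
      omega
    obtain ⟨w, hw, hwu⟩ := Finset.exists_mem_ne h2 u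
    exact ⟨w, (SimpleGraph.mem_neighborFinset H v w).1 hw, hwu⟩
  have hefne : ¬(v₁ = u₂ ∧ u₁ = v₂) := by
    rintro ⟨rfl, rfl⟩
    exact hef (Sym2.eq_swap)
  have hne1 : u₁ ≠ v₁ := e₁.ne
  have hne2 : u₂ ≠ v₂ := e₂.ne
  by_cases hc : ∃ w, H.Adj v₁ w ∧ w ≠ u₁ ∧ ¬(v₁ = v₂ ∧ w = u₂)
  · obtain ⟨w, hvw, hwu, hno⟩ := hc
    have hwv : v₁ ≠ w := hvw.ne
    have hrev : ∀ p ∈ ({(u₁, v₁), (u₂, v₂), (u₁, v₁), (v₁, w)} : Set (W × W)),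
        Prod.swap p ∉ ({(u₁, v₁), (u₂, v₂), (u₁, v₁), (v₁, w)} : Set (W × W)) := by
      intro p hp
      simp only [Set.mem_insert_iff, Set.mem_singleton_iff] at hp ⊢
      rcases hp with rfl | rfl | rfl | rfl <;>
        rintro (h9 | h9 | h9 | h9) <;>
        injection h9 with ha hb <;>
        first
          | exact hne1 ha | exact hne1 ha.symm | exact hne1 hb | exact hne1 hb.symm
          | exact hne2 ha | exact hne2 ha.symm | exact hne2 hb | exact hne2 hb.symm
          | exact hwu ha | exact hwu ha.symm | exact hwu hb | exact hwu hb.symm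
          | exact hwv ha | exact hwv ha.symm | exact hwv hb | exact hwv hb.symm
          | exact hefne ⟨ha, hb⟩ | exact hefne ⟨hb.symm, ha.symm⟩
          | exact hno ⟨ha.symm, hb.symm⟩ | exact hno ⟨hb, ha⟩
    obtain ⟨o, h1, h2, h3, h4⟩ := build h u₁ v₁ u₂ v₂ u₁ v₁ w e₁ e₂ e₁ hvw hrev
    exact ⟨o, h1, h2, ⟨u₁, v₁, w, Ne.symm hwu, h3, h4⟩,
      no_embed h o hanti u₁ v₁ w h3 h4⟩
  · push_neg at hc
    obtain ⟨w₀, hw₀, hw₀u⟩ := hnbr v₁ u₁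
    obtain ⟨hv12, rfl⟩ := hc w₀ hw₀ hw₀u
    obtain ⟨w', hw', hw'v⟩ := hnbr u₁ v₁
    have hw'u : w' ≠ u₁ := fun he => hw'.ne (he ▸ rfl)
    subst hv12
    have hrev : ∀ p ∈ ({(u₁, v₁), (w₀, v₁), (w', u₁), (u₁, v₁)} : Set (W × W)),
        Prod.swap p ∉ ({(u₁, v₁), (w₀, v₁), (w', u₁), (u₁, v₁)} : Set (W × W)) := by
      intro p hp
      simp only [Set.mem_insert_iff, Set.mem_singleton_iff] at hp ⊢
      rcases hp with rfl | rfl | rfl | rfl <;>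
        rintro (h9 | h9 | h9 | h9) <;>
        injection h9 with ha hb <;>
        first
          | exact hne1 ha | exact hne1 ha.symm | exact hne1 hb | exact hne1 hb.symm
          | exact hne2 ha | exact hne2 ha.symm | exact hne2 hb | exact hne2 hb.symm
          | exact hw'v ha | exact hw'v ha.symm | exact hw'v hb | exact hw'v hb.symm
          | exact hw'u ha | exact hw'u ha.symm | exact hw'u hb | exact hw'u hb.symm
          | exact hw₀u ha | exact hw₀u ha.symm | exact hw₀u hb | exact hw₀u hb.symm
    obtain ⟨o, h1, h2, h3, h4⟩ :=
      build h u₁ v₁ w₀ v₁ w' u₁ v₁ e₁ e₂ hw'.symm e₁ hrev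
    exact ⟨o, h1, h2, ⟨w', u₁, v₁, hw'v, h3, h4⟩,
      no_embed h o hanti w' u₁ v₁ h3 h4⟩
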